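/- Let s* : ℝ × ℝ × M → ℝ satisfy the cocycle equation s*(t, r+s, x) = s*(t, r, x) + s*(t, s, φ_r(x)) for all r, s, t ∈ ℝ and x ∈ M, together with (∂_1 s*)(t, 0, x) = 0, and suppose u_{t,s}(x) := (∂_1 ∂_2 s*)(t, s, x) exists and is continuous in (t, s, x). Then for all t, s ∈ ℝ and x ∈ M, (∂_1 s*)(t, s, x) = ∫_0^s u_{t,0}(φ_r(x)) dr. -/

import Mathlib

open intervalIntegral

/-- If `s* : ℝ × ℝ × M → ℝ` satisfies the cocycle equation
`s*(t, r+s, x) = s*(t, r, x) + s*(t, s, φ_r(x))`, together with `(∂₁ s*)(t,0,x) = 0`,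
and the mixed derivative `u_{t,s}(x) := (∂₁∂₂ s*)(t,s,x)` exists and is jointly
continuous, then `(∂₁ s*)(t,s,x) = ∫_0^s u_{t,0}(φ_r(x)) dr`. -/
theorem partial_one_sstar_eq_integral
    {M : Type*} [TopologicalSpace M]
    (φ : ℝ → M → M)
    (hφcont : Continuous fun p : ℝ × M => φ p.1 p.2)
    (hφ0 : ∀ x, φ 0 x = x)
    (hφadd : ∀ s t x, φ s (φ t x) = φ (s + t) x)
    (sstar : ℝ → ℝ → M → ℝ)
    (d₁ : ℝ → ℝ → M → ℝ) (u : ℝ → ℝ → M → ℝ)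
    (hd₁ : ∀ t s x, HasDerivAt (fun t' => sstar t' s x) (d₁ t s x) t)
    (hu : ∀ t s x, HasDerivAt (fun s' => d₁ t s' x) (u t s x) s)
    (hucont : Continuous fun p : ℝ × ℝ × M => u p.1 p.2.1 p.2.2)
    (hcocycle : ∀ t r s x, sstar t (r + s) x = sstar t r x + sstar t s (φ r x))
    (hzero : ∀ t x, d₁ t 0 x = 0) :
    ∀ t s x, d₁ t s x = ∫ r in (0:ℝ)..s, u t 0 (φ r x) := by

  intro t s x
  -- Step 1: cocycle for d₁
  have hd1coc : ∀ r s' : ℝ, d₁ t (r + s') x = d₁ t r x + d₁ t s' (φ r x) := by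
    intro r s'
    have h1 : HasDerivAt (fun t' => sstar t' (r + s') x)
        (d₁ t r x + d₁ t s' (φ r x)) t := by
      have := (hd₁ t r x).add (hd₁ t s' (φ r x))
      refine this.congr_of_eventuallyEq ?_
      filter_upwards with t' using (hcocycle t' r s' x)
    exact (hd₁ t (r + s') x).unique h1
  -- Step 2: u t r x = u t 0 (φ r x)
  have hukey : ∀ r : ℝ, u t r x = u t 0 (φ r x) := by
    intro r
    have hL : HasDerivAt (fun s' => d₁ t (r + s') x) (u t r x) 0 := by
      have h0 : HasDerivAt (fun s' => d₁ t s' x) (u t r x) (r + id 0) := by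
        simpa using hu t r x
      have := h0.comp 0 ((hasDerivAt_id (0:ℝ)).const_add r)
      simpa [Function.comp_def] using this
    have hR : HasDerivAt (fun s' => d₁ t r x + d₁ t s' (φ r x))
        (u t 0 (φ r x)) 0 := by
      simpa using (hu t 0 (φ r x)).const_add (d₁ t r x)
    have hL' : HasDerivAt (fun s' => d₁ t r x + d₁ t s' (φ r x)) (u t r x) 0 := by
      refine hL.congr_of_eventuallyEq ?_
      filter_upwards with s' using (hd1coc r s').symm
    exact hL'.unique hR
  -- Step 3: FTC
  have hcont : Continuous fun r => u t r x :=
    hucont.comp (continuous_const.prodMk (continuous_id.prodMk continuous_const))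
  have hFTC : (∫ r in (0:ℝ)..s, u t r x) = d₁ t s x - d₁ t 0 x := by
    refine intervalIntegral.integral_eq_sub_of_hasDerivAt
      (fun r _ => hu t r x) ?_
    exact hcont.intervalIntegrable 0 s
  rw [hzero, sub_zero] at hFTC
  rw [← hFTC]
  exact intervalIntegral.integral_congr fun r _ => hukey r
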